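/- Let d be a positive integer, δ ∈ [1/√d, 1], and let m be the integer with 2^{m/2} < δ√d ≤ 2^{(m+1)/2}. Then for every 0 < c ≤ 1 and every a ∈ ℝ^d, max{uᵀa : u ∈ ℝ^d, ‖u‖_{ℓ2} ≤ 1, ‖u‖_{ℓ∞} ≤ δ} ≤ (2/c)·max{wᵀa : w ∈ ℝ^d, ‖w‖_{ℓ2} ≤ c, and every coordinate of w belongs to {± c·2^{j/2}/√(2d) : j = 0,…,m}}. -/

import Mathlib

open scoped BigOperators

namespace IncoherentTensor

variable {k : ℕ}

/-- A `k`-th order tensor in `ℝ^{d 1 × ⋯ × d k}`. -/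
abbrev Tensor (d : Fin k → ℕ) : Type := (∀ j, Fin (d j)) → ℝ

variable {d : Fin k → ℕ}

/-- Entrywise inner product of tensors. -/
noncomputable def tinner (X Y : Tensor d) : ℝ := ∑ a : ∀ j, Fin (d j), X a * Y a

/-- Hilbert–Schmidt (entrywise ℓ2) norm. -/
noncomputable def hsNorm (X : Tensor d) : ℝ := Real.sqrt (tinner X X)

/-- Largest absolute entry. -/
noncomputable def maxNorm (X : Tensor d) : ℝ := ⨆ a, |X a|

/-- Euclidean norm of a vector. -/
noncomputable def l2 {n : ℕ} (u : Fin n → ℝ) : ℝ := Real.sqrt (∑ i, u i ^ 2)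

/-- Supremum norm of a vector. -/
noncomputable def linf {n : ℕ} (u : Fin n → ℝ) : ℝ := ⨆ i, |u i|

/-- Rank-one tensor `u_1 ⊗ ⋯ ⊗ u_k`. -/
def rankOne (u : ∀ j, Fin (d j) → ℝ) : Tensor d := fun a => ∏ j, u j (a j)

/-- Tensor spectral norm. -/
noncomputable def spectralNorm (X : Tensor d) : ℝ :=
  sSup {r | ∃ u : ∀ j, Fin (d j) → ℝ, (∀ j, l2 (u j) ≤ 1) ∧ r = tinner X (rankOne u)}

/-- Tensor nuclear norm. -/
noncomputable def nuclearNorm (X : Tensor d) : ℝ :=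
  sSup {r | ∃ Y : Tensor d, spectralNorm Y ≤ 1 ∧ r = tinner X Y}

/-- The set `U(δ)` of rank-one tensors satisfying the incoherence constraints in all but
two directions. -/
def Uset (δ : Fin k → ℝ) : Set (Tensor d) :=
  {Y | ∃ j1 j2 : Fin k, j1 < j2 ∧ ∃ u : ∀ j, Fin (d j) → ℝ,
    (∀ j, l2 (u j) ≤ 1) ∧ (∀ j, j ≠ j1 → j ≠ j2 → linf (u j) ≤ δ j) ∧ Y = rankOne u}

/-- Incoherent spectral norm `‖X‖_{∘,δ}`. -/
noncomputable def onorm (δ : Fin k → ℝ) (X : Tensor d) : ℝ :=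
  sSup {r | ∃ Y ∈ Uset (d := d) δ, r = tinner Y X}

/-- Incoherent nuclear norm `‖X‖_{⋆,δ}`. -/
noncomputable def starNorm (δ : Fin k → ℝ) (X : Tensor d) : ℝ :=
  sSup {r | ∃ Y : Tensor d, onorm δ Y ≤ 1 ∧ r = tinner Y X}

/-- The span `L_j(X)` of the mode-`j` fibers of `X`. -/
noncomputable def fiberSpan (X : Tensor d) (j : Fin k) :
    Submodule ℝ (EuclideanSpace ℝ (Fin (d j))) :=
  Submodule.span ℝ {v | ∃ a : ∀ i, Fin (d i), v = fun i => X (Function.update a j i)}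

/-- Tucker rank `r_j(X) = dim L_j(X)`. -/
noncomputable def tuckerRank (X : Tensor d) (j : Fin k) : ℕ :=
  Module.finrank ℝ (fiberSpan X j)

/-- Orthogonal projection `P_j(X)` of `ℝ^{d_j}` onto `L_j(X)`. -/
noncomputable def projMode (X : Tensor d) (j : Fin k) :
    EuclideanSpace ℝ (Fin (d j)) →L[ℝ] EuclideanSpace ℝ (Fin (d j)) :=
  (fiberSpan X j).subtypeL.comp (Submodule.orthogonalProjectionOnto (fiberSpan X j))

/-- The matrix of `P_j(X)` in the standard basis. -/
noncomputable def Pmat (X : Tensor d) (j : Fin k) : Matrix (Fin (d j)) (Fin (d j)) ℝ :=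
  Matrix.of fun a b => projMode X j (EuclideanSpace.single b 1) a

/-- Action of a Kronecker product `A_1 ⊗ ⋯ ⊗ A_k` of matrices on a tensor. -/
noncomputable def kronApply (A : ∀ j, Matrix (Fin (d j)) (Fin (d j)) ℝ) (W : Tensor d) :
    Tensor d :=
  fun a => ∑ b : ∀ j, Fin (d j), (∏ j, A j (a j) (b j)) * W b

/-- `Q⁰_X = P_1 ⊗ ⋯ ⊗ P_k`. -/
noncomputable def Q0 (X : Tensor d) (W : Tensor d) : Tensor d :=
  kronApply (fun j => Pmat X j) W

/-- `Q_X = Q⁰_X + Σ_j P_1 ⊗ ⋯ ⊗ P_j^⊥ ⊗ ⋯ ⊗ P_k`. -/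
noncomputable def QX (X : Tensor d) (W : Tensor d) : Tensor d :=
  Q0 X W + ∑ j : Fin k, kronApply (fun l => if l = j then 1 - Pmat X l else Pmat X l) W

/-- `Q_X^⊥ = I − Q_X`. -/
noncomputable def Qperp (X : Tensor d) (W : Tensor d) : Tensor d := W - QX X W

/-- Coherence `μ(U)` of a subspace of `ℝ^n`. -/
noncomputable def coherence {n : ℕ} (U : Submodule ℝ (EuclideanSpace ℝ (Fin n))) : ℝ :=
  ((n : ℝ) / (Module.finrank ℝ U : ℝ)) *
    ⨆ i : Fin n, ‖Submodule.orthogonalProjectionOnto U (EuclideanSpace.single i 1)‖ ^ 2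

/-- Probability of an event on a finite sample space, under the uniform distribution. -/
noncomputable def prob {Ω : Type*} [Fintype Ω] (P : Ω → Prop) : ℝ :=
  (Nat.card {ω : Ω // P ω} : ℝ) / (Fintype.card Ω : ℝ)

/-- `P_ω X` retains the entry `ω` of `X` and zeroes out the rest. -/
noncomputable def Pentry (ω : ∀ j, Fin (d j)) (X : Tensor d) : Tensor d :=
  fun a => if a = ω then X a else 0

/-- `P_Ω X` retains the entries of `X` on `Ω` and zeroes out the rest. -/
noncomputable def POmega (S : Finset (∀ j, Fin (d j))) (X : Tensor d) : Tensor d :=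
  fun a => if a ∈ S then X a else 0

/-- The empirical average `X̄ = (X_1 + ⋯ + X_n)/n` of `X_i = (d_1⋯d_k)·P_{ω_i} A`. -/
noncomputable def sampleAvg (A : Tensor d) (n : ℕ) (s : Fin n → ∀ j, Fin (d j)) : Tensor d :=
  fun a => (1 / (n : ℝ)) * ∑ i : Fin n, (∏ j, (d j : ℝ)) * Pentry (s i) A a

/-- `Y` is `μ`-incoherent. -/
noncomputable def muIncoherent (μ : ℝ) (Y : Tensor d) : Prop :=
  ∀ j, ∀ u : EuclideanSpace ℝ (Fin (d j)), ‖u‖ ≤ 1 →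
    linf (fun i => projMode Y j u i) ≤ Real.sqrt (μ * (tuckerRank Y j : ℝ) / (d j : ℝ))



private lemma rpow_half_sq (j : ℕ) : ((2:ℝ) ^ ((j:ℝ)/2)) ^ 2 = (2:ℝ) ^ j := by
  rw [← Real.rpow_natCast ((2:ℝ) ^ ((j:ℝ)/2)) 2,
    ← Real.rpow_mul (by norm_num : (0:ℝ) ≤ 2)]
  rw [show ((j:ℝ)/2 * (2:ℕ)) = (j:ℝ) by push_cast; ring]
  exact Real.rpow_natCast 2 j

private lemma rpow_half_succ_sq (m : ℕ) :
    ((2:ℝ) ^ (((m:ℝ)+1)/2)) ^ 2 = (2:ℝ) ^ (m+1) := by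
  rw [← Real.rpow_natCast ((2:ℝ) ^ (((m:ℝ)+1)/2)) 2,
    ← Real.rpow_mul (by norm_num : (0:ℝ) ≤ 2)]
  rw [show (((m:ℝ)+1)/2 * (2:ℕ)) = ((m+1:ℕ):ℝ) by push_cast; ring]
  exact Real.rpow_natCast 2 (m+1)

/-- first part of Lemma A / Lemma 9 extension: discretization of the
`ℓ2`/`ℓ∞`-constrained linear maximization. -/
theorem statement4 (d : ℕ) (hd : 0 < d) (δ : ℝ)
    (hδ : δ ∈ Set.Icc (1 / Real.sqrt d) 1)
    (m : ℕ) (hm1 : (2 : ℝ) ^ ((m : ℝ) / 2) < δ * Real.sqrt d)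
    (hm2 : δ * Real.sqrt d ≤ (2 : ℝ) ^ (((m : ℝ) + 1) / 2))
    (c : ℝ) (hc : 0 < c) (hc1 : c ≤ 1) (a : Fin d → ℝ) :
    sSup {x | ∃ u : Fin d → ℝ, l2 u ≤ 1 ∧ linf u ≤ δ ∧ x = ∑ i, u i * a i} ≤
      (2 / c) * sSup {x | ∃ w : Fin d → ℝ, l2 w ≤ c ∧
        (∀ i, ∃ j : ℕ, j ≤ m ∧
          (w i = c * (2 : ℝ) ^ ((j : ℝ) / 2) / Real.sqrt (2 * d) ∨
           w i = -(c * (2 : ℝ) ^ ((j : ℝ) / 2) / Real.sqrt (2 * d)))) ∧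
        x = ∑ i, w i * a i} := by

  have hd0 : (0:ℝ) < d := by exact_mod_cast hd
  have hsd : (0:ℝ) < Real.sqrt (2*(d:ℝ)) := Real.sqrt_pos.mpr (by positivity)
  have hδ1 : δ ≤ 1 := hδ.2
  have hδ0 : 0 < δ := lt_of_lt_of_le (by positivity) hδ.1
  -- the grid values
  set g : ℕ → ℝ := fun j => c * (2:ℝ) ^ ((j:ℝ)/2) / Real.sqrt (2*(d:ℝ)) with hgdef
  have hgpos : ∀ j, 0 < g j := by
    intro j
    have h2 : (0:ℝ) < (2:ℝ) ^ ((j:ℝ)/2) := Real.rpow_pos_of_pos (by norm_num) _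
    simp only [hgdef]
    positivity
  have hgsq : ∀ j : ℕ, g j ^ 2 = c ^ 2 * (2:ℝ) ^ j / (2*(d:ℝ)) := by
    intro j
    simp only [hgdef]
    rw [div_pow, mul_pow, rpow_half_sq, Real.sq_sqrt (by positivity : (0:ℝ) ≤ 2*(d:ℝ))]
  have hgmono : ∀ j, j ≤ m → g j ≤ g m := by
    intro j hj
    simp only [hgdef]
    have h2 : (2:ℝ) ^ ((j:ℝ)/2) ≤ (2:ℝ) ^ ((m:ℝ)/2) := by
      apply Real.rpow_le_rpow_of_exponent_le (by norm_num)
      have : (j:ℝ) ≤ (m:ℝ) := by exact_mod_cast hj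
      linarith
    gcongr
  set S2 : Set ℝ := {x | ∃ w : Fin d → ℝ, l2 w ≤ c ∧
        (∀ i, ∃ j : ℕ, j ≤ m ∧
          (w i = c * (2 : ℝ) ^ ((j : ℝ) / 2) / Real.sqrt (2 * d) ∨
           w i = -(c * (2 : ℝ) ^ ((j : ℝ) / 2) / Real.sqrt (2 * d)))) ∧
        x = ∑ i, w i * a i} with hS2def
  -- S2 is bounded above
  have habs : ∀ w : Fin d → ℝ, (∀ i, ∃ j : ℕ, j ≤ m ∧ (w i = g j ∨ w i = -(g j))) →
      ∀ i, |w i| ≤ g m := by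
    intro w hw i
    obtain ⟨j, hj, hwi⟩ := hw i
    have : |w i| = g j := by
      rcases hwi with h | h <;> rw [h]
      · exact abs_of_pos (hgpos j)
      · rw [abs_neg]; exact abs_of_pos (hgpos j)
    rw [this]; exact hgmono j hj
  have hBdd : BddAbove S2 := by
    refine ⟨g m * ∑ i, |a i|, ?_⟩
    rintro x ⟨w, hwl2, hwgrid, rfl⟩
    rw [Finset.mul_sum]
    refine le_trans (Finset.sum_le_sum fun i _ => le_abs_self _) (Finset.sum_le_sum ?_)
    intro i _
    rw [abs_mul]
    exact mul_le_mul_of_nonneg_right (habs w hwgrid i) (abs_nonneg _)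
  -- S2 has a nonnegative element
  have hsup2 : 0 ≤ sSup S2 := by
    set w0 : Fin d → ℝ := fun i => if 0 ≤ a i then g 0 else -(g 0) with hw0def
    have hmem : (∑ i, w0 i * a i) ∈ S2 := by
      refine ⟨w0, ?_, ?_, rfl⟩
      · have hsq : ∀ i, w0 i ^ 2 = c^2 / (2*(d:ℝ)) := by
          intro i
          have : w0 i ^ 2 = g 0 ^ 2 := by
            simp only [hw0def]; split <;> ring
          rw [this, hgsq]; norm_num
        unfold l2
        rw [Finset.sum_congr rfl fun i _ => hsq i]
        rw [Finset.sum_const, Finset.card_fin, nsmul_eq_mul]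
        rw [show (d:ℝ) * (c^2/(2*(d:ℝ))) = c^2 / 2 by field_simp]
        calc Real.sqrt (c^2/2) ≤ Real.sqrt (c^2) := by
              apply Real.sqrt_le_sqrt; nlinarith [sq_nonneg c]
          _ = c := Real.sqrt_sq hc.le
      · intro i
        refine ⟨0, Nat.zero_le _, ?_⟩
        simp only [hw0def]
        split
        · left; rfl
        · right; rfl
    have hnonneg : 0 ≤ ∑ i, w0 i * a i := by
      apply Finset.sum_nonneg
      intro i _
      simp only [hw0def]
      split
      · exact mul_nonneg (hgpos 0).le (by assumption)
      · rw [neg_mul]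
        have : a i < 0 := by linarith [lt_of_not_ge (by assumption)]
        nlinarith [hgpos 0]
    exact le_trans hnonneg (le_csSup hBdd hmem)
  -- main bound
  apply Real.sSup_le
  · rintro x ⟨u, hul2, hulinf, rfl⟩
    -- construct the discretized vector
    have hsum : ∑ i, u i ^ 2 ≤ 1 := by
      have h0 : (0:ℝ) ≤ ∑ i, u i ^ 2 := Finset.sum_nonneg fun i _ => sq_nonneg _
      have := Real.sq_sqrt h0
      unfold l2 at hul2
      nlinarith [hul2, Real.sqrt_nonneg (∑ i, u i ^ 2)]
    have hui : ∀ i, |u i| ≤ δ := by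
      intro i
      have h := le_ciSup (f := fun i => |u i|) (Set.Finite.bddAbove (Set.finite_range _)) i
      unfold linf at hulinf
      exact le_trans h hulinf
    set r : Fin d → ℝ := fun i => max ((d:ℝ) * u i ^ 2) 1 with hrdef
    have hr1 : ∀ i, (1:ℝ) ≤ r i := fun i => le_max_right _ _
    set J : Fin d → ℕ := fun i => min m (Nat.log 2 (Nat.floor (r i))) with hJdef
    have hJm : ∀ i, J i ≤ m := fun i => min_le_left _ _
    have hfloor1 : ∀ i, 1 ≤ Nat.floor (r i) := fun i => Nat.le_floor (by exact_mod_cast hr1 i)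
    have hA : ∀ i, (2:ℝ) ^ (J i) ≤ r i := by
      intro i
      have h1 : 2 ^ (J i) ≤ Nat.floor (r i) := by
        calc 2 ^ (J i) ≤ 2 ^ (Nat.log 2 (Nat.floor (r i))) :=
              Nat.pow_le_pow_right (by norm_num) (min_le_right _ _)
          _ ≤ Nat.floor (r i) := Nat.pow_log_le_self 2 (by have := hfloor1 i; omega)
      calc (2:ℝ) ^ (J i) = ((2 ^ (J i) : ℕ) : ℝ) := by push_cast; ring
        _ ≤ ((Nat.floor (r i) : ℕ) : ℝ) := by exact_mod_cast h1
        _ ≤ r i := Nat.floor_le (by linarith [hr1 i])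
    have hB : ∀ i, r i ≤ (2:ℝ) ^ (J i + 1) := by
      intro i
      rcases le_or_gt (Nat.log 2 (Nat.floor (r i))) m with h | h
      · have hJ : J i = Nat.log 2 (Nat.floor (r i)) := min_eq_right h
        have h1 : Nat.floor (r i) < 2 ^ (Nat.log 2 (Nat.floor (r i)) + 1) :=
          Nat.lt_pow_succ_log_self (by norm_num) _
        have h2 : r i < Nat.floor (r i) + 1 := Nat.lt_floor_add_one _
        have h3 : (Nat.floor (r i) : ℝ) + 1 ≤ ((2 ^ (Nat.log 2 (Nat.floor (r i)) + 1) : ℕ) : ℝ) := by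
          exact_mod_cast h1
        rw [hJ]
        push_cast at h3 ⊢
        linarith
      · have hJ : J i = m := min_eq_left h.le
        rw [hJ]
        have hdδ : (d:ℝ) * δ ^ 2 ≤ (2:ℝ) ^ (m+1) := by
          have := rpow_half_succ_sq m
          have hsq : (δ * Real.sqrt d) ^ 2 ≤ ((2:ℝ) ^ (((m:ℝ)+1)/2)) ^ 2 := by
            apply pow_le_pow_left₀ (by positivity) hm2
          rw [mul_pow, Real.sq_sqrt hd0.le, this] at hsq
          linarith
        have h1 : (d:ℝ) * u i ^ 2 ≤ (2:ℝ) ^ (m+1) := by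
          have : u i ^ 2 ≤ δ ^ 2 := by
            have := hui i
            nlinarith [abs_nonneg (u i), sq_abs (u i)]
          nlinarith
        have h2 : (1:ℝ) ≤ (2:ℝ) ^ (m+1) := by exact_mod_cast Nat.one_le_two_pow (n := m+1)
        exact max_le h1 h2
    have hC : ∑ i, r i ≤ 2 * (d:ℝ) := by
      have : ∀ i, r i ≤ (d:ℝ) * u i ^ 2 + 1 := by
        intro i
        apply max_le
        · nlinarith [sq_nonneg (u i)]
        · nlinarith [sq_nonneg (u i), hd0]
      calc ∑ i, r i ≤ ∑ i, ((d:ℝ) * u i ^ 2 + 1) := Finset.sum_le_sum fun i _ => this i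
        _ = (d:ℝ) * ∑ i, u i ^ 2 + d := by
            rw [Finset.sum_add_distrib, ← Finset.mul_sum]
            simp
        _ ≤ 2 * (d:ℝ) := by nlinarith
    set w : Fin d → ℝ := fun i => if 0 ≤ a i then g (J i) else -(g (J i)) with hwdef
    have hwsq : ∀ i, w i ^ 2 = g (J i) ^ 2 := by
      intro i; simp only [hwdef]; split <;> ring
    have hwmem : (∑ i, w i * a i) ∈ S2 := by
      refine ⟨w, ?_, ?_, rfl⟩
      · unfold l2
        have hb : ∑ i, w i ^ 2 ≤ c ^ 2 := by
          calc ∑ i, w i ^ 2 = ∑ i, c^2 * (2:ℝ)^(J i) / (2*(d:ℝ)) := by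
                refine Finset.sum_congr rfl fun i _ => ?_
                rw [hwsq i, hgsq]
            _ ≤ ∑ i, c^2 * r i / (2*(d:ℝ)) := by
                refine Finset.sum_le_sum fun i _ => ?_
                have := hA i
                have hc2 : (0:ℝ) ≤ c^2 := sq_nonneg c
                gcongr
            _ = c^2 / (2*(d:ℝ)) * ∑ i, r i := by
                rw [Finset.mul_sum]
                refine Finset.sum_congr rfl fun i _ => ?_
                ring
            _ ≤ c^2 / (2*(d:ℝ)) * (2*(d:ℝ)) := by
                apply mul_le_mul_of_nonneg_left hC (by positivity)
            _ = c^2 := by field_simp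
        calc Real.sqrt (∑ i, w i ^ 2) ≤ Real.sqrt (c^2) := Real.sqrt_le_sqrt hb
          _ = c := Real.sqrt_sq hc.le
      · intro i
        refine ⟨J i, hJm i, ?_⟩
        simp only [hwdef]
        split
        · left; rfl
        · right; rfl
    have hpointwise : ∀ i, u i * a i ≤ (2/c) * (w i * a i) := by
      intro i
      have hwa : w i * a i = g (J i) * |a i| := by
        simp only [hwdef]
        split
        · rw [abs_of_nonneg (by assumption)]
        · rw [abs_of_neg (lt_of_not_ge (by assumption))]; ring
      have hub : |u i| ≤ (2/c) * g (J i) := by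
        have h1 : u i ^ 2 ≤ ((2/c) * g (J i)) ^ 2 := by
          have hAi : (d:ℝ) * u i ^ 2 ≤ (2:ℝ) ^ (J i + 1) :=
            le_trans (le_max_left _ _) (hB i)
          have h2 : ((2/c) * g (J i))^2 = (2:ℝ)^(J i + 1) / d := by
            rw [mul_pow, hgsq, div_pow]
            rw [pow_succ]
            field_simp
            ring
          rw [h2]
          rw [le_div_iff₀ hd0]
          linarith
        calc |u i| = Real.sqrt (u i ^ 2) := (Real.sqrt_sq_eq_abs _).symm
          _ ≤ Real.sqrt (((2/c) * g (J i)) ^ 2) := Real.sqrt_le_sqrt h1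
          _ = (2/c) * g (J i) := Real.sqrt_sq (by positivity)
      calc u i * a i ≤ |u i * a i| := le_abs_self _
        _ = |u i| * |a i| := abs_mul _ _
        _ ≤ ((2/c) * g (J i)) * |a i| := mul_le_mul_of_nonneg_right hub (abs_nonneg _)
        _ = (2/c) * (w i * a i) := by rw [hwa]; ring
    calc ∑ i, u i * a i ≤ ∑ i, (2/c) * (w i * a i) :=
          Finset.sum_le_sum fun i _ => hpointwise i
      _ = (2/c) * ∑ i, w i * a i := by rw [Finset.mul_sum]
      _ ≤ (2/c) * sSup S2 := by
          apply mul_le_mul_of_nonneg_left (le_csSup hBdd hwmem) (by positivity)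
  · exact mul_nonneg (by positivity) hsup2


end IncoherentTensor
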